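/- The function f is an exact solution of the relativistic Vlasov–Fokker–Planck equation: for every t > 0 and all x, p ∈ ℝ, ∂f/∂t (t,x,p) + v(p) · ∂f/∂x (t,x,p) = (1/(β² 𝔇)) · ∂/∂p [ (∂f/∂p)(t,x,p) + β v(p) f(t,x,p) ], where the outer ∂/∂p is the derivative at p of the function q ↦ (∂f/∂p)(t,x,q) + β v(q) f(t,x,q). -/

import Mathlib

set_option maxHeartbeats 1000000

open MeasureTheory

/-- Relativistic energy `ε(p) = √(m² + p²)`. -/
noncomputable def eps (m p : ℝ) : ℝ := Real.sqrt (m ^ 2 + p ^ 2)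

/-- Relativistic velocity `v(p) = p/ε(p)`. -/
noncomputable def vel (m p : ℝ) : ℝ := p / eps m p

/-- The distribution function
`f(t,x,p) = exp(α − β ε(p)) + (1/2π) ∫ g(k) exp(−β ε(p) − i β 𝔇 k p + i k x − 𝔇 k² t) dk`. -/
noncomputable def fdist (m β D α : ℝ) (g : ℝ → ℂ) (t x p : ℝ) : ℂ :=
  Complex.exp (↑(α - β * eps m p)) +
    (2 * Real.pi)⁻¹ * ∫ k : ℝ, g k * Complex.exp (-(↑(β * eps m p))
      - Complex.I * ↑(β * D * k * p) + Complex.I * ↑(k * x) - ↑(D * k ^ 2 * t))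

/-- The complex phase appearing in the integrand of `fdist`. -/
noncomputable def cph (m β D t x p k : ℝ) : ℂ :=
  -(↑(β * eps m p)) - Complex.I * ↑(β * D * k * p) + Complex.I * ↑(k * x) - ↑(D * k ^ 2 * t)

lemma eps_pos (m p : ℝ) (hm : 0 < m) : 0 < eps m p := Real.sqrt_pos.2 (by positivity)

lemma abs_le_eps (m p : ℝ) : |p| ≤ eps m p := by
  rw [eps, ← Real.sqrt_sq_eq_abs]
  exact Real.sqrt_le_sqrt (by nlinarith)

lemma abs_vel_le_one (m p : ℝ) (hm : 0 < m) : |vel m p| ≤ 1 := by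
  rw [vel, abs_div, abs_of_pos (eps_pos m p hm)]
  exact div_le_one_of_le₀ (abs_le_eps m p) (eps_pos m p hm).le

lemma hasDerivAt_eps (m p : ℝ) (hm : 0 < m) : HasDerivAt (eps m) (vel m p) p := by
  have h0 : (0:ℝ) < m ^ 2 + p ^ 2 := by positivity
  have h : HasDerivAt (fun q : ℝ => m ^ 2 + q ^ 2) (2 * p) p := by
    simpa using (hasDerivAt_pow 2 p).const_add (m ^ 2)
  have := ((Real.hasDerivAt_sqrt h0.ne').comp p h : HasDerivAt (eps m) _ p)
  refine this.congr_deriv ?_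
  rw [vel, eps]
  field_simp

lemma norm_cexp_cph (m β D t x p k : ℝ) :
    ‖Complex.exp (cph m β D t x p k)‖ = Real.exp (-(β * eps m p) - D * k ^ 2 * t) := by
  rw [Complex.norm_exp]
  congr 1
  simp only [cph, Complex.add_re, Complex.sub_re, Complex.neg_re, Complex.ofReal_re,
    Complex.mul_re, Complex.I_re, Complex.ofReal_im, Complex.I_im, zero_mul, mul_zero,
    sub_zero, zero_sub, neg_zero, one_mul]
  ring

lemma hasDerivAt_cph_t' (m β D t x p k : ℝ) :
    HasDerivAt (fun s => cph m β D s x p k) (-(↑(D * k ^ 2)) : ℂ) t := by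
  have h : HasDerivAt (fun s : ℝ => ((D * k ^ 2 * s : ℝ) : ℂ)) (↑(D * k ^ 2)) t := by
    have := ((hasDerivAt_id t).const_mul (D * k ^ 2)).ofReal_comp
    simp only [mul_one] at this
    exact this
  exact h.const_sub _

lemma hasDerivAt_cph_x' (m β D t x p k : ℝ) :
    HasDerivAt (fun y => cph m β D t y p k) (Complex.I * ↑k) x := by
  have h : HasDerivAt (fun y : ℝ => Complex.I * ((k * y : ℝ) : ℂ)) (Complex.I * ↑k) x := by
    have := (((hasDerivAt_id x).const_mul k).ofReal_comp).const_mul Complex.I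
    simp only [mul_one] at this
    exact this
  exact (h.const_add _).sub_const _

lemma hasDerivAt_cph_p (m β D t x p k : ℝ) (hm : 0 < m) :
    HasDerivAt (fun q => cph m β D t x q k)
      (-(↑(β * vel m p)) - Complex.I * ↑(β * D * k) : ℂ) p := by
  have h1 : HasDerivAt (fun q : ℝ => ((β * eps m q : ℝ) : ℂ)) (↑(β * vel m p)) p :=
    (((hasDerivAt_eps m p hm).const_mul β).ofReal_comp)
  have h2 : HasDerivAt (fun q : ℝ => Complex.I * ((β * D * k * q : ℝ) : ℂ))
      (Complex.I * ↑(β * D * k)) p := by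
    have := (((hasDerivAt_id p).const_mul (β * D * k)).ofReal_comp).const_mul Complex.I
    simp only [mul_one] at this
    exact this
  exact (((h1.neg.sub h2).add_const _).sub_const _)

lemma continuous_cph_k (m β D t x p : ℝ) : Continuous (fun k => cph m β D t x p k) := by
  unfold cph; fun_prop

/-- master integrable majorant -/
lemma M_integrable (g : SchwartzMap ℝ ℂ) :
    Integrable (fun k : ℝ => (1 + |k|) ^ 3 * ‖g k‖) := by
  have h : Integrable (fun k : ℝ => 4 * ‖g k‖ + 4 * (‖k‖ ^ 3 * ‖g k‖)) :=
    ((g.integrable (μ := volume)).norm.const_mul 4).add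
      ((g.integrable_pow_mul volume 3).const_mul 4)
  refine h.mono' ?_ ?_
  · exact (((continuous_const.add continuous_abs).pow 3).mul g.continuous.norm).aestronglyMeasurable
  · filter_upwards with k
    have h1 : (0:ℝ) ≤ |k| := abs_nonneg k
    have h2 : (0:ℝ) ≤ ‖g k‖ := norm_nonneg _
    have h3 : (1 + |k|) ^ 3 ≤ 4 + 4 * |k| ^ 3 := by nlinarith [sq_nonneg (1 - |k|), sq_nonneg |k|]
    have : (1 + |k|) ^ 3 * ‖g k‖ ≤ (4 + 4 * |k| ^ 3) * ‖g k‖ := by nlinarith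
    rw [Real.norm_eq_abs, abs_of_nonneg (by positivity)]
    calc (1 + |k|) ^ 3 * ‖g k‖ ≤ (4 + 4 * |k| ^ 3) * ‖g k‖ := this
    _ = 4 * ‖g k‖ + 4 * (‖k‖ ^ 3 * ‖g k‖) := by rw [Real.norm_eq_abs]; ring

lemma exp_re_le_one (m β D t x p k : ℝ) (hm : 0 < m) (hβ : 0 < β) (hD : 0 < D) (ht : 0 ≤ t) :
    ‖Complex.exp (cph m β D t x p k)‖ ≤ 1 := by
  rw [norm_cexp_cph, Real.exp_le_one_iff]
  have h1 := (eps_pos m p hm).le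
  have h2 : (0:ℝ) ≤ D * k ^ 2 * t := by positivity
  nlinarith

lemma integrable_wgE (m β D t x p : ℝ) (hm : 0 < m) (hβ : 0 < β) (hD : 0 < D) (ht : 0 ≤ t)
    (g : SchwartzMap ℝ ℂ) (w : ℝ → ℂ) (hw : Continuous w) (C : ℝ)
    (hC : ∀ k, ‖w k‖ ≤ C * (1 + |k|) ^ 2) :
    Integrable (fun k : ℝ => w k * (g k * Complex.exp (cph m β D t x p k))) := by
  refine ((M_integrable g).const_mul C).mono' ?_ ?_
  · exact (hw.mul (g.continuous.mul
      (Complex.continuous_exp.comp (continuous_cph_k m β D t x p)))).aestronglyMeasurable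
  · filter_upwards with k
    have hC0 : 0 ≤ C := by
      have h := (norm_nonneg (w 0)).trans (hC 0)
      simpa using h
    have h1 : ‖w k * (g k * Complex.exp (cph m β D t x p k))‖
        ≤ (C * (1 + |k|) ^ 2) * (‖g k‖ * 1) := by
      rw [norm_mul, norm_mul]
      exact mul_le_mul (hC k) (mul_le_mul_of_nonneg_left
        (exp_re_le_one m β D t x p k hm hβ hD ht) (norm_nonneg _)) (by positivity)
        (mul_nonneg hC0 (by positivity))
    refine h1.trans ?_
    have h2 : (1 + |k|) ^ 2 * ‖g k‖ ≤ (1 + |k|) ^ 3 * ‖g k‖ := by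
      have : (1 + |k|) ^ 2 ≤ (1 + |k|) ^ 3 :=
        pow_le_pow_right₀ (le_add_of_nonneg_right (abs_nonneg k)) (by norm_num)
      nlinarith [norm_nonneg (g k), abs_nonneg k]
    nlinarith [norm_nonneg (g k), abs_nonneg k]

lemma meas_gE (m β D t x p : ℝ) (g : SchwartzMap ℝ ℂ) :
    AEStronglyMeasurable (fun k : ℝ => g k * Complex.exp (cph m β D t x p k)) volume :=
  (g.continuous.mul (Complex.continuous_exp.comp
    (continuous_cph_k m β D t x p))).aestronglyMeasurable

lemma integrable_gE (m β D t x p : ℝ) (hm : 0 < m) (hβ : 0 < β) (hD : 0 < D) (ht : 0 ≤ t)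
    (g : SchwartzMap ℝ ℂ) :
    Integrable (fun k : ℝ => g k * Complex.exp (cph m β D t x p k)) := by
  have := integrable_wgE m β D t x p hm hβ hD ht g (fun _ => 1) continuous_const 1
    (fun k => by
      have : (1:ℝ) ≤ (1 + |k|) ^ 2 := one_le_pow₀ (le_add_of_nonneg_right (abs_nonneg k))
      simpa using this)
  simpa using this

lemma hasDerivAt_int_t (m β D x p t : ℝ) (hm : 0 < m) (hβ : 0 < β) (hD : 0 < D) (ht : 0 < t)
    (g : SchwartzMap ℝ ℂ) :
    HasDerivAt (fun s => ∫ k : ℝ, g k * Complex.exp (cph m β D s x p k))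
      (∫ k : ℝ, g k * (Complex.exp (cph m β D t x p k) * -(↑(D * k ^ 2)))) t := by
  have key := hasDerivAt_integral_of_dominated_loc_of_deriv_le (μ := volume) (x₀ := t)
    (F := fun s k => g k * Complex.exp (cph m β D s x p k))
    (F' := fun s k => g k * (Complex.exp (cph m β D s x p k) * -(↑(D * k ^ 2))))
    (bound := fun k => D * ((1 + |k|) ^ 3 * ‖g k‖)) (s := Metric.ball t (t / 2)) (Metric.ball_mem_nhds _ (by positivity))
    (Filter.Eventually.of_forall fun s => meas_gE m β D s x p g)
    (integrable_gE m β D t x p hm hβ hD ht.le g)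
    ?_ ?_ ((M_integrable g).const_mul D) ?_
  · exact key.2
  · have hc : Continuous (fun k : ℝ => (-(↑(D * k ^ 2)) : ℂ)) := by fun_prop
    exact ((g.continuous.mul ((Complex.continuous_exp.comp (continuous_cph_k m β D t x p)).mul
      hc))).aestronglyMeasurable
  · filter_upwards with k s hs
    have hs0 : 0 ≤ s := by
      rw [Metric.mem_ball, Real.dist_eq, abs_sub_lt_iff] at hs
      linarith
    rw [norm_mul, norm_mul, norm_neg]
    have he := exp_re_le_one m β D s x p k hm hβ hD hs0
    have h1 : ‖g k‖ * (‖Complex.exp (cph m β D s x p k)‖ * ‖(↑(D * k ^ 2) : ℂ)‖)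
        ≤ ‖g k‖ * (1 * (D * k ^ 2)) := by
      rw [Complex.norm_real, Real.norm_eq_abs, abs_of_nonneg (by positivity)]
      have h0 : (0:ℝ) ≤ D * k ^ 2 := by positivity
      exact mul_le_mul_of_nonneg_left (mul_le_mul_of_nonneg_right he h0) (norm_nonneg _)
    refine h1.trans ?_
    have hk : k ^ 2 ≤ (1 + |k|) ^ 3 := by
      nlinarith [abs_nonneg k, sq_abs k, sq_nonneg (1 - |k|), sq_nonneg k]
    have h2 : k ^ 2 * ‖g k‖ ≤ (1 + |k|) ^ 3 * ‖g k‖ :=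
      mul_le_mul_of_nonneg_right hk (norm_nonneg _)
    have h3 : D * (k ^ 2 * ‖g k‖) ≤ D * ((1 + |k|) ^ 3 * ‖g k‖) :=
      mul_le_mul_of_nonneg_left h2 hD.le
    linarith
  · filter_upwards with k s _
    exact ((hasDerivAt_cph_t' m β D s x p k).cexp).const_mul (g k)

lemma hasDerivAt_int_x (m β D x p t : ℝ) (hm : 0 < m) (hβ : 0 < β) (hD : 0 < D) (ht : 0 ≤ t)
    (g : SchwartzMap ℝ ℂ) :
    HasDerivAt (fun y => ∫ k : ℝ, g k * Complex.exp (cph m β D t y p k))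
      (∫ k : ℝ, g k * (Complex.exp (cph m β D t x p k) * (Complex.I * ↑k))) x := by
  have key := hasDerivAt_integral_of_dominated_loc_of_deriv_le (μ := volume) (x₀ := x)
    (F := fun y k => g k * Complex.exp (cph m β D t y p k))
    (F' := fun y k => g k * (Complex.exp (cph m β D t y p k) * (Complex.I * ↑k)))
    (bound := fun k => (1 + |k|) ^ 3 * ‖g k‖) (s := Metric.ball x 1) (Metric.ball_mem_nhds _ one_pos)
    (Filter.Eventually.of_forall fun y => meas_gE m β D t y p g)
    (integrable_gE m β D t x p hm hβ hD ht g)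
    ?_ ?_ (M_integrable g) ?_
  · exact key.2
  · have hc : Continuous (fun k : ℝ => Complex.I * (k : ℂ)) := by fun_prop
    exact ((g.continuous.mul ((Complex.continuous_exp.comp (continuous_cph_k m β D t x p)).mul
      hc))).aestronglyMeasurable
  · filter_upwards with k y _
    rw [norm_mul, norm_mul, norm_mul, Complex.norm_I, Complex.norm_real, one_mul]
    have he := exp_re_le_one m β D t y p k hm hβ hD ht
    have h1 : ‖g k‖ * (‖Complex.exp (cph m β D t y p k)‖ * ‖k‖) ≤ ‖g k‖ * (1 * ‖k‖) :=
      mul_le_mul_of_nonneg_left (mul_le_mul_of_nonneg_right he (norm_nonneg _)) (norm_nonneg _)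
    refine h1.trans ?_
    have hk : ‖k‖ ≤ (1 + |k|) ^ 3 := by
      rw [Real.norm_eq_abs]
      nlinarith [abs_nonneg k, sq_nonneg (1 + |k|), sq_nonneg |k|]
    have := mul_le_mul_of_nonneg_right hk (norm_nonneg (g k))
    linarith
  · filter_upwards with k y _
    exact ((hasDerivAt_cph_x' m β D t y p k).cexp).const_mul (g k)

lemma hasDerivAt_int_p (m β D t x p : ℝ) (hm : 0 < m) (hβ : 0 < β) (hD : 0 < D) (ht : 0 ≤ t)
    (g : SchwartzMap ℝ ℂ) (w : ℝ → ℂ) (hw : Continuous w) (C : ℝ)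
    (hC : ∀ k, ‖w k‖ ≤ C * (1 + |k|) ^ 2) :
    HasDerivAt (fun q => ∫ k : ℝ, w k * (g k * Complex.exp (cph m β D t x q k)))
      (∫ k : ℝ, w k * (g k * (Complex.exp (cph m β D t x p k) *
        (-(↑(β * vel m p)) - Complex.I * ↑(β * D * k))))) p := by
  have hC0 : 0 ≤ C := by
    have h := (norm_nonneg (w 0)).trans (hC 0)
    simpa using h
  have key := hasDerivAt_integral_of_dominated_loc_of_deriv_le (μ := volume) (x₀ := p)
    (F := fun q k => w k * (g k * Complex.exp (cph m β D t x q k)))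
    (F' := fun q k => w k * (g k * (Complex.exp (cph m β D t x q k) *
      (-(↑(β * vel m q)) - Complex.I * ↑(β * D * k)))))
    (bound := fun k => C * (β * (1 + D)) * ((1 + |k|) ^ 3 * ‖g k‖)) (s := Metric.ball p 1) (Metric.ball_mem_nhds _ one_pos)
    (Filter.Eventually.of_forall fun q =>
      ((hw.mul (g.continuous.mul (Complex.continuous_exp.comp
        (continuous_cph_k m β D t x q))))).aestronglyMeasurable)
    (integrable_wgE m β D t x p hm hβ hD ht g w hw C hC)
    ?_ ?_ (((M_integrable g).const_mul _)) ?_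
  · exact key.2
  · have hc : Continuous (fun k : ℝ => (-(↑(β * vel m p)) - Complex.I * ↑(β * D * k) : ℂ)) := by
      fun_prop
    exact (hw.mul (g.continuous.mul ((Complex.continuous_exp.comp
      (continuous_cph_k m β D t x p)).mul hc))).aestronglyMeasurable
  · filter_upwards with k q _
    have he := exp_re_le_one m β D t x q k hm hβ hD ht
    have hv := abs_vel_le_one m q hm
    have hcoef : ‖(-(↑(β * vel m q)) - Complex.I * ↑(β * D * k) : ℂ)‖
        ≤ β * (1 + D) * (1 + |k|) := by
      refine (norm_sub_le _ _).trans ?_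
      rw [norm_neg, norm_mul, Complex.norm_I, one_mul, Complex.norm_real, Complex.norm_real,
        Real.norm_eq_abs, Real.norm_eq_abs]
      simp only [abs_mul, abs_of_pos hβ, abs_of_pos hD]
      nlinarith [abs_nonneg k, abs_nonneg (vel m q)]
    rw [norm_mul, norm_mul, norm_mul]
    have hE1 : ‖Complex.exp (cph m β D t x q k)‖ *
        ‖(-(↑(β * vel m q)) - Complex.I * ↑(β * D * k) : ℂ)‖
        ≤ 1 * (β * (1 + D) * (1 + |k|)) :=
      mul_le_mul he hcoef (norm_nonneg _) one_pos.le
    have h2 : ‖w k‖ * (‖g k‖ * (‖Complex.exp (cph m β D t x q k)‖ *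
        ‖(-(↑(β * vel m q)) - Complex.I * ↑(β * D * k) : ℂ)‖))
        ≤ (C * (1 + |k|) ^ 2) * (‖g k‖ * (1 * (β * (1 + D) * (1 + |k|)))) := by
      refine mul_le_mul (hC k) (mul_le_mul_of_nonneg_left hE1 (norm_nonneg _)) (by positivity) ?_
      positivity
    refine h2.trans (le_of_eq ?_)
    ring
  · filter_upwards with k q _
    exact (((hasDerivAt_cph_p m β D t x q k hm).cexp).const_mul (g k)).const_mul (w k)

lemma alg_key (b d v k G : ℂ) (hb : b ≠ 0) (hd : d ≠ 0) :
    G * -(d * k ^ 2) + v * (G * (Complex.I * k))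
      = (1 / (b ^ 2 * d)) *
        ((-(Complex.I * (b * d * k))) * (G * (-(b * v) - Complex.I * (b * d * k)))) := by
  field_simp
  ring_nf
  linear_combination (-(G * k ^ 2 * d)) * Complex.I_sq

lemma hasDerivAt_equi (m β α p : ℝ) (hm : 0 < m) :
    HasDerivAt (fun q : ℝ => Complex.exp (↑(α - β * eps m q)))
      (Complex.exp (↑(α - β * eps m p)) * -(↑(β * vel m p))) p := by
  have h : HasDerivAt (fun q : ℝ => α - β * eps m q) (-(β * vel m p)) p :=
    ((hasDerivAt_eps m p hm).const_mul β).const_sub α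
  have := h.ofReal_comp.cexp
  simpa using this

lemma hBDw (β D : ℝ) (hβ : 0 < β) (hD : 0 < D) :
    ∀ k : ℝ, ‖(-(Complex.I * ↑(β * D * k)) : ℂ)‖ ≤ (β * D) * (1 + |k|) ^ 2 := by
  intro k
  rw [norm_neg, norm_mul, Complex.norm_I, one_mul, Complex.norm_real, Real.norm_eq_abs]
  simp only [abs_mul, abs_of_pos hβ, abs_of_pos hD]
  nlinarith [abs_nonneg k, sq_nonneg (1 + |k|), mul_pos hβ hD, sq_nonneg |k|]

/-- `f` is an exact solution of the relativistic Vlasov–Fokker–Planck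
equation `∂_t f + v ∂_x f = (1/(β²𝔇)) ∂_p(∂_p f + β v f)` for every `t > 0`, `x, p ∈ ℝ`. -/
theorem fdist_solves_VFP (m β D α : ℝ) (hm : 0 < m) (hβ : 0 < β) (hD : 0 < D)
    (g : SchwartzMap ℝ ℂ) (hg : ∀ k : ℝ, g (-k) = (starRingEnd ℂ) (g k))
    (t x p : ℝ) (ht : 0 < t) :
    deriv (fun s : ℝ => fdist m β D α (⇑g) s x p) t
      + ↑(vel m p) * deriv (fun y : ℝ => fdist m β D α (⇑g) t y p) x
    = ((1 / (β ^ 2 * D) : ℝ) : ℂ) *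
        deriv (fun q : ℝ => deriv (fun r : ℝ => fdist m β D α (⇑g) t x r) q
          + ↑(β * vel m q) * fdist m β D α (⇑g) t x q) p := by
  set c : ℂ := (↑(2 * Real.pi)⁻¹ : ℂ) with hc
  have hw2 : Continuous (fun k : ℝ => (-(Complex.I * ↑(β * D * k)) : ℂ)) := by fun_prop
  -- t derivative
  have hT : HasDerivAt (fun s : ℝ => fdist m β D α (⇑g) s x p)
      (c * ∫ k : ℝ, g k * (Complex.exp (cph m β D t x p k) * -(↑(D * k ^ 2)))) t := by
    have h := ((hasDerivAt_int_t m β D x p t hm hβ hD ht g).const_mul c).const_add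
      (Complex.exp (↑(α - β * eps m p) : ℂ))
    exact h
  -- x derivative
  have hX : HasDerivAt (fun y : ℝ => fdist m β D α (⇑g) t y p)
      (c * ∫ k : ℝ, g k * (Complex.exp (cph m β D t x p k) * (Complex.I * ↑k))) x := by
    have h := ((hasDerivAt_int_x m β D x p t hm hβ hD ht.le g).const_mul c).const_add
      (Complex.exp (↑(α - β * eps m p) : ℂ))
    exact h
  -- inner p derivative, for every q
  have hPq : ∀ q : ℝ, HasDerivAt (fun r : ℝ => fdist m β D α (⇑g) t x r)
      (Complex.exp (↑(α - β * eps m q)) * -(↑(β * vel m q)) +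
        c * ∫ k : ℝ, g k * (Complex.exp (cph m β D t x q k) *
          (-(↑(β * vel m q)) - Complex.I * ↑(β * D * k)))) q := by
    intro q
    have h1 := hasDerivAt_equi m β α q hm
    have h2 := hasDerivAt_int_p m β D t x q hm hβ hD ht.le g (fun _ => (1:ℂ))
      continuous_const 1 (fun k => by
        have : (1:ℝ) ≤ (1 + |k|) ^ 2 := one_le_pow₀ (le_add_of_nonneg_right (abs_nonneg k))
        simpa using this)
    simp only [one_mul] at h2
    exact h1.add (h2.const_mul c)
  -- the combination ∂ₚf + βv f equals a single integral
  have hfun : (fun q : ℝ => deriv (fun r : ℝ => fdist m β D α (⇑g) t x r) q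
        + ↑(β * vel m q) * fdist m β D α (⇑g) t x q)
      = (fun q : ℝ => c * ∫ k : ℝ, (-(Complex.I * ↑(β * D * k))) *
          (g k * Complex.exp (cph m β D t x q k))) := by
    funext q
    rw [(hPq q).deriv]
    have hi1 : Integrable (fun k : ℝ => g k * Complex.exp (cph m β D t x q k)) :=
      integrable_gE m β D t x q hm hβ hD ht.le g
    have hi2 : Integrable (fun k : ℝ => (-(Complex.I * ↑(β * D * k))) *
        (g k * Complex.exp (cph m β D t x q k))) :=
      integrable_wgE m β D t x q hm hβ hD ht.le g _ hw2 (β * D) (hBDw β D hβ hD)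
    have hsplit : (∫ k : ℝ, g k * (Complex.exp (cph m β D t x q k) *
          (-(↑(β * vel m q)) - Complex.I * ↑(β * D * k))))
        = (-(↑(β * vel m q) : ℂ)) * (∫ k : ℝ, g k * Complex.exp (cph m β D t x q k))
          + ∫ k : ℝ, (-(Complex.I * ↑(β * D * k))) *
            (g k * Complex.exp (cph m β D t x q k)) := by
      rw [← integral_const_mul, ← integral_add (hi1.const_mul _) hi2]
      congr 1
      funext k
      ring
    have hfd : fdist m β D α (⇑g) t x q = Complex.exp (↑(α - β * eps m q)) +
        c * ∫ k : ℝ, g k * Complex.exp (cph m β D t x q k) := rfl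
    rw [hsplit, hfd]
    ring
  rw [hfun]
  -- outer p derivative
  have hG := ((hasDerivAt_int_p m β D t x p hm hβ hD ht.le g
      (fun k => -(Complex.I * ↑(β * D * k))) hw2 (β * D) (hBDw β D hβ hD)).const_mul c)
  rw [hT.deriv, hX.deriv, hG.deriv]
  -- final algebra
  have hi1 : Integrable (fun k : ℝ => (-(↑(D * k ^ 2)) : ℂ) *
      (g k * Complex.exp (cph m β D t x p k))) := by
    refine integrable_wgE m β D t x p hm hβ hD ht.le g _ (by fun_prop) D (fun k => ?_)
    rw [norm_neg, Complex.norm_real, Real.norm_eq_abs]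
    simp only [abs_mul, abs_of_pos hD, sq_abs, abs_pow]
    nlinarith [abs_nonneg k, sq_abs k, sq_nonneg (1 - |k|), sq_nonneg |k|, sq_nonneg (1 + |k|)]
  have hi2 : Integrable (fun k : ℝ => (↑(vel m p) * (Complex.I * ↑k) : ℂ) *
      (g k * Complex.exp (cph m β D t x p k))) := by
    refine integrable_wgE m β D t x p hm hβ hD ht.le g _ (by fun_prop) (|vel m p|) (fun k => ?_)
    rw [norm_mul, norm_mul, Complex.norm_I, one_mul, Complex.norm_real, Complex.norm_real,
      Real.norm_eq_abs, Real.norm_eq_abs]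
    nlinarith [abs_nonneg k, abs_nonneg (vel m p), sq_nonneg (1 + |k|), sq_nonneg |k|]
  calc c * (∫ k : ℝ, g k * (Complex.exp (cph m β D t x p k) * -(↑(D * k ^ 2))))
        + ↑(vel m p) * (c * ∫ k : ℝ, g k * (Complex.exp (cph m β D t x p k) * (Complex.I * ↑k)))
      = c * ∫ k : ℝ, ((-(↑(D * k ^ 2)) : ℂ) * (g k * Complex.exp (cph m β D t x p k))
          + (↑(vel m p) * (Complex.I * ↑k)) * (g k * Complex.exp (cph m β D t x p k))) := by
        rw [integral_add hi1 hi2]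
        rw [show (∫ k : ℝ, g k * (Complex.exp (cph m β D t x p k) * -(↑(D * k ^ 2))))
            = ∫ k : ℝ, (-(↑(D * k ^ 2)) : ℂ) * (g k * Complex.exp (cph m β D t x p k)) by
          congr 1; funext k; ring]
        rw [show (∫ k : ℝ, g k * (Complex.exp (cph m β D t x p k) * (Complex.I * ↑k)))
            = ∫ k : ℝ, (Complex.I * ↑k) * (g k * Complex.exp (cph m β D t x p k)) by
          congr 1; funext k; ring]
        rw [show (fun k : ℝ => (↑(vel m p) * (Complex.I * ↑k) : ℂ) *
            (g k * Complex.exp (cph m β D t x p k)))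
            = (fun k : ℝ => (↑(vel m p) : ℂ) * ((Complex.I * ↑k) *
              (g k * Complex.exp (cph m β D t x p k)))) by funext k; ring]
        rw [integral_const_mul]
        ring
    _ = ((1 / (β ^ 2 * D) : ℝ) : ℂ) * (c * ∫ k : ℝ, (-(Complex.I * ↑(β * D * k))) *
          (g k * (Complex.exp (cph m β D t x p k) *
            (-(↑(β * vel m p)) - Complex.I * ↑(β * D * k))))) := by
        rw [show ((1 / (β ^ 2 * D) : ℝ) : ℂ) * (c * ∫ k : ℝ, (-(Complex.I * ↑(β * D * k))) *
            (g k * (Complex.exp (cph m β D t x p k) *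
              (-(↑(β * vel m p)) - Complex.I * ↑(β * D * k)))))
            = c * ∫ k : ℝ, ((1 / (β ^ 2 * D) : ℝ) : ℂ) * ((-(Complex.I * ↑(β * D * k))) *
            (g k * (Complex.exp (cph m β D t x p k) *
              (-(↑(β * vel m p)) - Complex.I * ↑(β * D * k))))) by
          rw [integral_const_mul]; ring]
        congr 1
        apply integral_congr_ae
        filter_upwards with k
        have hb : ((β : ℝ) : ℂ) ≠ 0 := Complex.ofReal_ne_zero.2 hβ.ne'
        have hd : ((D : ℝ) : ℂ) ≠ 0 := Complex.ofReal_ne_zero.2 hD.ne'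
        have := alg_key (β : ℂ) (D : ℂ) (↑(vel m p)) (↑k)
          (g k * Complex.exp (cph m β D t x p k)) hb hd
        push_cast
        push_cast at this
        linear_combination this
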